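/- Let (X,⊑) be a countably infinite linear order possessing a least element and a greatest element, and let X = A ∪ B where A and B are disjoint, A and B are each dense in X (between any two distinct elements of X there lies an element of A and an element of B), and both the least and the greatest element of X belong to A. Let ℚ ∩ [0,1] = A_ℚ ∪ B_ℚ be a partition such that A_ℚ and B_ℚ are each dense in ℚ ∩ [0,1] and 0, 1 ∈ A_ℚ. Then there exists an order isomorphism F : X → ℚ ∩ [0,1] such that F[A] = A_ℚ. -/

import Mathlib

noncomputable section ColoredBackAndForth

open Order

variable {α β : Type*} [LinearOrder α] [LinearOrder β]

/-- Colored version of `Order.exists_between_finsets`: we can find an element of any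
prescribed color strictly between two finite sets, given colored density and
colored unboundedness. -/
theorem exists_between_finsets_colored (cβ : β → Bool)
    (hd : ∀ (c : Bool) (x y : β), x < y → ∃ z, cβ z = c ∧ x < z ∧ z < y)
    (hu : ∀ (c : Bool) (x : β), ∃ z, cβ z = c ∧ x < z)
    (hl : ∀ (c : Bool) (x : β), ∃ z, cβ z = c ∧ z < x)
    [nonem : Nonempty β] (c : Bool) (lo hi : Finset β)
    (lo_lt_hi : ∀ x ∈ lo, ∀ y ∈ hi, x < y) :
    ∃ m : β, cβ m = c ∧ (∀ x ∈ lo, x < m) ∧ ∀ y ∈ hi, m < y := by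
  by_cases nlo : lo.Nonempty
  · by_cases nhi : hi.Nonempty
    · obtain ⟨m, hc, hm1, hm2⟩ :=
        hd c _ _ (lo_lt_hi _ (Finset.max'_mem _ nlo) _ (Finset.min'_mem _ nhi))
      exact ⟨m, hc, fun x hx => lt_of_le_of_lt (Finset.le_max' lo x hx) hm1,
        fun y hy => lt_of_lt_of_le hm2 (Finset.min'_le hi y hy)⟩
    · obtain ⟨m, hc, hm⟩ := hu c (Finset.max' lo nlo)
      exact ⟨m, hc, fun x hx => lt_of_le_of_lt (Finset.le_max' lo x hx) hm,
        fun y hy => (nhi ⟨y, hy⟩).elim⟩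
  · by_cases nhi : hi.Nonempty
    · obtain ⟨m, hc, hm⟩ := hl c (Finset.min' hi nhi)
      exact ⟨m, hc, fun x hx => (nlo ⟨x, hx⟩).elim,
        fun y hy => lt_of_lt_of_le hm (Finset.min'_le hi y hy)⟩
    · obtain ⟨x⟩ := nonem
      obtain ⟨m, hc, _⟩ := hu c x
      exact ⟨m, hc, fun x hx => (nlo ⟨x, hx⟩).elim, fun y hy => (nhi ⟨y, hy⟩).elim⟩

/-- Partial isomorphisms that in addition match colors. -/
def PIC (cα : α → Bool) (cβ : β → Bool) : Type _ :=
  { f : Finset (α × β) //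
    (∀ p ∈ f, ∀ q ∈ f, cmp (Prod.fst p) (Prod.fst q) = cmp (Prod.snd p) (Prod.snd q)) ∧
      ∀ p ∈ f, cβ (Prod.snd p) = cα (Prod.fst p) }

namespace PIC

variable {cα : α → Bool} {cβ : β → Bool}

instance : Inhabited (PIC cα cβ) :=
  ⟨⟨∅, fun _p h => (Finset.notMem_empty _ h).elim,
      fun _p h => (Finset.notMem_empty _ h).elim⟩⟩

instance : Preorder (PIC cα cβ) := Subtype.preorder _

theorem exists_across
    (hd : ∀ (c : Bool) (x y : β), x < y → ∃ z, cβ z = c ∧ x < z ∧ z < y)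
    (hu : ∀ (c : Bool) (x : β), ∃ z, cβ z = c ∧ x < z)
    (hl : ∀ (c : Bool) (x : β), ∃ z, cβ z = c ∧ z < x)
    [Nonempty β] (f : PIC cα cβ) (a : α) :
    ∃ b : β, cβ b = cα a ∧ ∀ p ∈ f.val, cmp (Prod.fst p) a = cmp (Prod.snd p) b := by
  by_cases h : ∃ b, (a, b) ∈ f.val
  · obtain ⟨b, hb⟩ := h
    exact ⟨b, f.prop.2 _ hb, fun p hp => f.prop.1 _ hp _ hb⟩
  have key :
      ∀ x ∈ (f.val.filter fun p : α × β => p.fst < a).image Prod.snd,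
        ∀ y ∈ (f.val.filter fun p : α × β => a < p.fst).image Prod.snd, x < y := by
    intro x hx y hy
    rw [Finset.mem_image] at hx hy
    rcases hx with ⟨p, hp1, rfl⟩
    rcases hy with ⟨q, hq1, rfl⟩
    rw [Finset.mem_filter] at hp1 hq1
    rw [← lt_iff_lt_of_cmp_eq_cmp (f.prop.1 _ hp1.1 _ hq1.1)]
    exact lt_trans hp1.right hq1.right
  obtain ⟨b, hbc, hb⟩ := exists_between_finsets_colored cβ hd hu hl (cα a) _ _ key
  refine ⟨b, hbc, ?_⟩
  rintro ⟨p1, p2⟩ hp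
  have hne : p1 ≠ a := fun he => h ⟨p2, he ▸ hp⟩
  rcases lt_or_gt_of_ne hne with hlt | hgt
  · have : p1 < a ∧ p2 < b :=
      ⟨hlt, hb.1 _ (Finset.mem_image.mpr ⟨(p1, p2), Finset.mem_filter.mpr ⟨hp, hlt⟩, rfl⟩)⟩
    rw [← cmp_eq_lt_iff, ← cmp_eq_lt_iff] at this
    exact this.1.trans this.2.symm
  · have : a < p1 ∧ b < p2 :=
      ⟨hgt, hb.2 _ (Finset.mem_image.mpr ⟨(p1, p2), Finset.mem_filter.mpr ⟨hp, hgt⟩, rfl⟩)⟩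
    rw [← cmp_eq_gt_iff, ← cmp_eq_gt_iff] at this
    exact this.1.trans this.2.symm

/-- Flip a colored partial isomorphism. -/
protected def comm (f : PIC cα cβ) : PIC cβ cα :=
  ⟨f.val.image (Equiv.prodComm α β), by
    constructor
    · intro p hp q hq
      rw [Finset.mem_image] at hp hq
      obtain ⟨p', hp', rfl⟩ := hp
      obtain ⟨q', hq', rfl⟩ := hq
      exact (f.prop.1 _ hp' _ hq').symm
    · intro p hp
      rw [Finset.mem_image] at hp
      obtain ⟨p', hp', rfl⟩ := hp
      exact (f.prop.2 _ hp').symm⟩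

/-- Cofinal set of partial isos defined at `a : α`. -/
def definedAtLeftC
    (hd : ∀ (c : Bool) (x y : β), x < y → ∃ z, cβ z = c ∧ x < z ∧ z < y)
    (hu : ∀ (c : Bool) (x : β), ∃ z, cβ z = c ∧ x < z)
    (hl : ∀ (c : Bool) (x : β), ∃ z, cβ z = c ∧ z < x)
    [Nonempty β] (a : α) : Cofinal (PIC cα cβ) where
  carrier := {f | ∃ b : β, (a, b) ∈ f.val}
  isCofinal f := by
    obtain ⟨b, hbc, a_b⟩ := exists_across hd hu hl f a
    refine ⟨⟨insert (a, b) f.val, ?_, ?_⟩, ⟨b, Finset.mem_insert_self _ _⟩,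
      Finset.subset_insert _ _⟩
    · intro p hp q hq
      rw [Finset.mem_insert] at hp hq
      rcases hp with (rfl | pf) <;> rcases hq with (rfl | qf)
      · simp only [cmp_self_eq_eq]
      · rw [cmp_eq_cmp_symm]
        exact a_b _ qf
      · exact a_b _ pf
      · exact f.prop.1 _ pf _ qf
    · intro p hp
      rw [Finset.mem_insert] at hp
      rcases hp with (rfl | pf)
      · exact hbc
      · exact f.prop.2 _ pf

/-- Cofinal set of partial isos hitting `b : β`. -/
def definedAtRightC
    (hd : ∀ (c : Bool) (x y : α), x < y → ∃ z, cα z = c ∧ x < z ∧ z < y)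
    (hu : ∀ (c : Bool) (x : α), ∃ z, cα z = c ∧ x < z)
    (hl : ∀ (c : Bool) (x : α), ∃ z, cα z = c ∧ z < x)
    [Nonempty α] (b : β) : Cofinal (PIC cα cβ) where
  carrier := {f | ∃ a : α, (a, b) ∈ f.val}
  isCofinal f := by
    rcases (definedAtLeftC hd hu hl b).isCofinal f.comm with ⟨f', ⟨a, ha⟩, hsub⟩
    refine ⟨f'.comm, ⟨a, ?_⟩, ?_⟩
    · show (a, b) ∈ f'.val.image _
      rw [← Finset.mem_coe, Finset.coe_image, Equiv.image_eq_preimage_symm]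
      exact ha
    · show f.val ⊆ f'.val.image _
      intro p hp
      rw [← Finset.mem_coe, Finset.coe_image, Equiv.image_eq_preimage_symm]
      exact hsub (show ((Equiv.prodComm α β) p) ∈ (f.val.image _) from
        Finset.mem_image_of_mem _ hp)

end PIC

/-- Core colored back-and-forth: two countable unbounded dense linear orders with
colorings that are dense (in both colors) are isomorphic by a color-preserving map. -/
theorem colored_iso_unbounded [Countable α] [Countable β] [Nonempty α] [Nonempty β]
    (cα : α → Bool) (cβ : β → Bool)
    (hαd : ∀ (c : Bool) (x y : α), x < y → ∃ z, cα z = c ∧ x < z ∧ z < y)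
    (hαu : ∀ (c : Bool) (x : α), ∃ z, cα z = c ∧ x < z)
    (hαl : ∀ (c : Bool) (x : α), ∃ z, cα z = c ∧ z < x)
    (hβd : ∀ (c : Bool) (x y : β), x < y → ∃ z, cβ z = c ∧ x < z ∧ z < y)
    (hβu : ∀ (c : Bool) (x : β), ∃ z, cβ z = c ∧ x < z)
    (hβl : ∀ (c : Bool) (x : β), ∃ z, cβ z = c ∧ z < x) :
    ∃ F : α ≃o β, ∀ a, cβ (F a) = cα a := by
  cases nonempty_encodable α
  cases nonempty_encodable β
  let to_cofinal : α ⊕ β → Cofinal (PIC cα cβ) := fun p =>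
    Sum.recOn p (PIC.definedAtLeftC hβd hβu hβl) (PIC.definedAtRightC hαd hαu hαl)
  let our_ideal : Ideal (PIC cα cβ) := idealOfCofinals default to_cofinal
  have hF : ∀ a : α, ∃ b : β, ∃ f ∈ our_ideal, (a, b) ∈ f.val := by
    intro a
    obtain ⟨f, ⟨b, hb⟩, hf⟩ := cofinal_meets_idealOfCofinals default to_cofinal (Sum.inl a)
    exact ⟨b, f, hf, hb⟩
  have hG : ∀ b : β, ∃ a : α, ∃ f ∈ our_ideal, (a, b) ∈ f.val := by
    intro b
    obtain ⟨f, ⟨a, ha⟩, hf⟩ := cofinal_meets_idealOfCofinals default to_cofinal (Sum.inr b)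
    exact ⟨a, f, hf, ha⟩
  choose F hFspec using hF
  choose G hGspec using hG
  have hcmp : ∀ (a : α) (b : β), cmp a (G b) = cmp (F a) b := by
    intro a b
    obtain ⟨f, hf, ha⟩ := hFspec a
    obtain ⟨g, hg, hb⟩ := hGspec b
    rcases our_ideal.directed _ hf _ hg with ⟨m, _, fm, gm⟩
    exact m.prop.1 (a, _) (fm ha) (_, b) (gm hb)
  refine ⟨OrderIso.ofCmpEqCmp F G hcmp, fun a => ?_⟩
  obtain ⟨f, _, ha⟩ := hFspec a
  exact f.prop.2 _ ha

/-- Bounded colored back-and-forth: strip the endpoints, apply the unbounded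
version to the interior, and glue the endpoints back. -/
theorem colored_iso_bounded [Countable α] [Countable β]
    (cα : α → Bool) (cβ : β → Bool)
    (hαd : ∀ (c : Bool) (x y : α), x < y → ∃ z, cα z = c ∧ x < z ∧ z < y)
    (hβd : ∀ (c : Bool) (x y : β), x < y → ∃ z, cβ z = c ∧ x < z ∧ z < y)
    (mα Mα : α) (hmα : ∀ x, mα ≤ x) (hMα : ∀ x, x ≤ Mα) (hltα : mα < Mα)
    (hcmα : cα mα = true) (hcMα : cα Mα = true)
    (mβ Mβ : β) (hmβ : ∀ x, mβ ≤ x) (hMβ : ∀ x, x ≤ Mβ) (hltβ : mβ < Mβ)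
    (hcmβ : cβ mβ = true) (hcMβ : cβ Mβ = true) :
    ∃ F : α ≃o β, ∀ a, cβ (F a) = cα a := by
  let α' := { x : α // mα < x ∧ x < Mα }
  let β' := { x : β // mβ < x ∧ x < Mβ }
  have nα : Nonempty α' := by
    obtain ⟨z, _, hz⟩ := hαd true mα Mα hltα
    exact ⟨⟨z, hz⟩⟩
  have nβ : Nonempty β' := by
    obtain ⟨z, _, hz⟩ := hβd true mβ Mβ hltβ
    exact ⟨⟨z, hz⟩⟩
  obtain ⟨G, hG⟩ :=
    colored_iso_unbounded (α := α') (β := β') (fun x => cα x.val) (fun x => cβ x.val)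
      (fun c x y hxy => by
        obtain ⟨z, hc, h1, h2⟩ := hαd c x.val y.val hxy
        exact ⟨⟨z, x.prop.1.trans h1, h2.trans y.prop.2⟩, hc, h1, h2⟩)
      (fun c x => by
        obtain ⟨z, hc, h1, h2⟩ := hαd c x.val Mα x.prop.2
        exact ⟨⟨z, x.prop.1.trans h1, h2⟩, hc, h1⟩)
      (fun c x => by
        obtain ⟨z, hc, h1, h2⟩ := hαd c mα x.val x.prop.1
        exact ⟨⟨z, h1, h2.trans x.prop.2⟩, hc, h2⟩)
      (fun c x y hxy => by
        obtain ⟨z, hc, h1, h2⟩ := hβd c x.val y.val hxy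
        exact ⟨⟨z, x.prop.1.trans h1, h2.trans y.prop.2⟩, hc, h1, h2⟩)
      (fun c x => by
        obtain ⟨z, hc, h1, h2⟩ := hβd c x.val Mβ x.prop.2
        exact ⟨⟨z, x.prop.1.trans h1, h2⟩, hc, h1⟩)
      (fun c x => by
        obtain ⟨z, hc, h1, h2⟩ := hβd c mβ x.val x.prop.1
        exact ⟨⟨z, h1, h2.trans x.prop.2⟩, hc, h2⟩)
  classical
  set f : α → β := fun x =>
    if h : mα < x ∧ x < Mα then (G ⟨x, h⟩).val else if x = mα then mβ else Mβ with hfdef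
  have hfmid : ∀ (x : α) (h : mα < x ∧ x < Mα), f x = (G ⟨x, h⟩).val := by
    intro x h; simp only [hfdef, dif_pos h]
  have hfm : f mα = mβ := by
    simp only [hfdef]
    rw [dif_neg (fun h => lt_irrefl _ h.1)]
    simp
  have hfM : f Mα = Mβ := by
    have h1 : ¬(mα < Mα ∧ Mα < Mα) := fun h => lt_irrefl _ h.2
    simp only [hfdef, dif_neg h1, if_neg hltα.ne']
  have tri : ∀ x : α, x = mα ∨ x = Mα ∨ (mα < x ∧ x < Mα) := by
    intro x
    rcases eq_or_lt_of_le (hmα x) with h | h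
    · exact Or.inl h.symm
    rcases eq_or_lt_of_le (hMα x) with h' | h'
    · exact Or.inr (Or.inl h')
    · exact Or.inr (Or.inr ⟨h, h'⟩)
  have triβ : ∀ x : β, x = mβ ∨ x = Mβ ∨ (mβ < x ∧ x < Mβ) := by
    intro x
    rcases eq_or_lt_of_le (hmβ x) with h | h
    · exact Or.inl h.symm
    rcases eq_or_lt_of_le (hMβ x) with h' | h'
    · exact Or.inr (Or.inl h')
    · exact Or.inr (Or.inr ⟨h, h'⟩)
  have hmono : StrictMono f := by
    intro x y hxy
    rcases tri x with rfl | rfl | hx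
    · rcases tri y with rfl | rfl | hy
      · exact absurd hxy (lt_irrefl _)
      · rw [hfm, hfM]; exact hltβ
      · rw [hfm, hfmid y hy]; exact (G ⟨y, hy⟩).prop.1
    · exact absurd (hxy.trans_le (hMα y)) (lt_irrefl _)
    · rcases tri y with rfl | rfl | hy
      · exact absurd (hxy.trans_le (hmα x)) (lt_irrefl _)
      · rw [hfmid x hx, hfM]; exact (G ⟨x, hx⟩).prop.2
      · rw [hfmid x hx, hfmid y hy]
        exact G.strictMono (show (⟨x, hx⟩ : α') < ⟨y, hy⟩ from hxy)
  have hsurj : Function.Surjective f := by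
    intro b
    rcases triβ b with rfl | rfl | hb
    · exact ⟨mα, hfm⟩
    · exact ⟨Mα, hfM⟩
    · refine ⟨(G.symm ⟨b, hb⟩).val, ?_⟩
      rw [hfmid _ (G.symm ⟨b, hb⟩).prop]
      have : (⟨(G.symm ⟨b, hb⟩).val, (G.symm ⟨b, hb⟩).prop⟩ : α') = G.symm ⟨b, hb⟩ := rfl
      rw [this, G.apply_symm_apply]
  refine ⟨StrictMono.orderIsoOfSurjective f hmono hsurj, fun a => ?_⟩
  show cβ (f a) = cα a
  rcases tri a with rfl | rfl | ha
  · rw [hfm, hcmβ, hcmα]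
  · rw [hfM, hcMβ, hcMα]
  · rw [hfmid a ha]
    exact hG ⟨a, ha⟩

end ColoredBackAndForth

/-- Back-and-forth: a countably infinite linear order with least and greatest
elements, partitioned into two dense sets `A`, `B` with the extremes in `A`,
is isomorphic to `ℚ ∩ [0,1]` by an isomorphism matching `A` with `A_ℚ`. -/
theorem order_iso_rat_Icc_matching {X : Type*} [LinearOrder X] [Countable X] [Infinite X]
    (A B : Set X) (hdisj : Disjoint A B) (hunion : A ∪ B = Set.univ)
    (hAdense : ∀ x y : X, x < y → ∃ a ∈ A, x < a ∧ a < y)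
    (hBdense : ∀ x y : X, x < y → ∃ b ∈ B, x < b ∧ b < y)
    (m : X) (hm : ∀ x : X, m ≤ x) (hmA : m ∈ A)
    (M : X) (hM : ∀ x : X, x ≤ M) (hMA : M ∈ A)
    (AQ BQ : Set ↥(Set.Icc (0:ℚ) 1))
    (hdisjQ : Disjoint AQ BQ) (hunionQ : AQ ∪ BQ = Set.univ)
    (hAQdense : ∀ x y : ↥(Set.Icc (0:ℚ) 1), x < y → ∃ a ∈ AQ, x < a ∧ a < y)
    (hBQdense : ∀ x y : ↥(Set.Icc (0:ℚ) 1), x < y → ∃ b ∈ BQ, x < b ∧ b < y)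
    (h0 : (⟨0, by norm_num⟩ : ↥(Set.Icc (0:ℚ) 1)) ∈ AQ)
    (h1 : (⟨1, by norm_num⟩ : ↥(Set.Icc (0:ℚ) 1)) ∈ AQ) :
    ∃ F : X ≃o ↥(Set.Icc (0:ℚ) 1), ⇑F '' A = AQ := by
  classical
  let Y := ↥(Set.Icc (0:ℚ) 1)
  let zY : Y := (⟨0, by norm_num⟩ : Y)
  let oY : Y := (⟨1, by norm_num⟩ : Y)
  have hmM : m < M := by
    by_contra h
    push_neg at h
    obtain ⟨x, y, hxy⟩ := exists_pair_ne X
    exact hxy (le_antisymm (((hM x).trans h).trans (hm y)) (((hM y).trans h).trans (hm x)))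
  have hzo : zY < oY := by
    rw [Subtype.mk_lt_mk]; norm_num
  have hzle : ∀ x : Y, zY ≤ x := fun x => Subtype.coe_le_coe.mp x.prop.1
  have hole : ∀ x : Y, x ≤ oY := fun x => Subtype.coe_le_coe.mp x.prop.2
  obtain ⟨F, hF⟩ :=
    colored_iso_bounded (α := X) (β := Y)
      (fun x => decide (x ∈ A)) (fun x => decide (x ∈ AQ))
      (by
        intro c x y hxy
        cases c
        · obtain ⟨b, hb, h1, h2⟩ := hBdense x y hxy
          exact ⟨b, decide_eq_false fun hA => Set.disjoint_left.mp hdisj hA hb, h1, h2⟩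
        · obtain ⟨a, ha, h1, h2⟩ := hAdense x y hxy
          exact ⟨a, decide_eq_true ha, h1, h2⟩)
      (by
        intro c x y hxy
        cases c
        · obtain ⟨b, hb, h1, h2⟩ := hBQdense x y hxy
          exact ⟨b, decide_eq_false fun hA => Set.disjoint_left.mp hdisjQ hA hb, h1, h2⟩
        · obtain ⟨a, ha, h1, h2⟩ := hAQdense x y hxy
          exact ⟨a, decide_eq_true ha, h1, h2⟩)
      m M hm hM hmM (decide_eq_true hmA) (decide_eq_true hMA)
      zY oY hzle hole hzo (decide_eq_true h0) (decide_eq_true h1)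
  have hiff : ∀ a : X, F a ∈ AQ ↔ a ∈ A := fun a => decide_eq_decide.mp (hF a)
  refine ⟨F, Set.ext fun q => ?_⟩
  constructor
  · rintro ⟨a, ha, rfl⟩
    exact (hiff a).mpr ha
  · intro hq
    refine ⟨F.symm q, ?_, F.apply_symm_apply q⟩
    have := hiff (F.symm q)
    rw [F.apply_symm_apply] at this
    exact this.mp hq
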